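/- arXiv:2004.12976 — 6 statements merged into one kernel-verified Lean document; each statement's English description precedes it below -/
import Mathlib

section
/- For f(z) = exp(z) - 1, if the orbit of z ever enters the open left half-plane {w : Re(w) < 0}, then fⁿ(z) → 0 as n → ∞. -/
open Filter Topology intervalIntegral

/-- Integral bound: `|exp u - 1| ≤ |u| * (1 + exp (re u))/2`. -/
lemma exp_sub_one_abs_le (u : ℂ) :
    ‖Complex.exp u - 1‖ ≤ ‖u‖ * ((1 + Real.exp u.re) / 2) := by
  rcases eq_or_ne u 0 with rfl | hu
  · simp
  have hint : (∫ t in (0:ℝ)..1, Complex.exp (u * t)) = (Complex.exp u - 1) / u := by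
    rw [integral_exp_mul_complex hu]; simp
  have h1 : ‖Complex.exp u - 1‖
      = ‖u‖ * ‖(Complex.exp u - 1)/u‖ := by
    have hau : ‖u‖ ≠ 0 := by simpa using hu
    rw [norm_div, mul_comm, div_mul_cancel₀ _ hau]
  rw [h1, ← hint]
  gcongr
  calc ‖∫ t in (0:ℝ)..1, Complex.exp (u * t)‖
      ≤ ∫ t in (0:ℝ)..1, ‖Complex.exp (u * t)‖ :=
        by simpa using
          intervalIntegral.norm_integral_le_integral_norm (μ := MeasureTheory.volume)
            (f := fun t : ℝ => Complex.exp (u * t)) zero_le_one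
    _ ≤ ∫ t in (0:ℝ)..1, ((1 - t) + t * Real.exp u.re) := by
        apply intervalIntegral.integral_mono_on zero_le_one
        · apply Continuous.intervalIntegrable
          continuity
        · apply Continuous.intervalIntegrable
          continuity
        · intro t ht
          simp only [Set.mem_Icc] at ht
          have : ‖Complex.exp (u * t)‖ = Real.exp (t * u.re) := by
            rw [Complex.norm_exp]
            congr 1
            simp [Complex.mul_re, mul_comm]
          rw [this]
          have := convexOn_exp.2 (Set.mem_univ (0:ℝ)) (Set.mem_univ u.re)
            (by linarith [ht.1, ht.2] : (0:ℝ) ≤ 1 - t) ht.1 (by ring)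
          simpa [smul_eq_mul, mul_comm] using this
    _ = (1 + Real.exp u.re) / 2 := by
        rw [intervalIntegral.integral_add, intervalIntegral.integral_sub]
        · simp
          ring
        all_goals apply Continuous.intervalIntegrable; continuity

/-- Points of the disc `|u+1| ≤ 1` satisfy `re u ≤ -|u|²/2`. -/
lemma re_le_of_mem_disc (u : ℂ) (hu : ‖u + 1‖ ≤ 1) :
    u.re ≤ -(‖u‖)^2 / 2 := by
  have h1 : Complex.normSq (u + 1) ≤ 1 := by
    rw [← Complex.sq_norm]
    nlinarith [norm_nonneg (u+1)]
  have h2 : (‖u‖)^2 = Complex.normSq u := Complex.sq_norm u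
  simp only [Complex.normSq_apply, Complex.add_re, Complex.add_im, Complex.one_re,
    Complex.one_im] at h1 h2
  nlinarith

/-- The disc `|u+1| ≤ 1` is invariant under `u ↦ exp u - 1`. -/
lemma disc_invariant (u : ℂ) (hu : ‖u + 1‖ ≤ 1) :
    ‖Complex.exp u - 1 + 1‖ ≤ 1 := by
  have hre : u.re ≤ 0 := by
    have := re_le_of_mem_disc u hu
    nlinarith [sq_nonneg (‖u‖)]
  simpa [Complex.norm_exp] using Real.exp_le_one_iff.mpr hre

/-- For `f(z) = exp z - 1`: if the orbit of `z` ever enters the open left half-plane,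
then `fⁿ(z) → 0`. -/
theorem orbit_entering_left_halfplane_tendsto_zero (z : ℂ)
    (h : ∃ n : ℕ, ((fun w => Complex.exp w - 1)^[n] z).re < 0) :
    Tendsto (fun n : ℕ => (fun w => Complex.exp w - 1)^[n] z) atTop (𝓝 0) := by
  obtain ⟨m, hm⟩ := h
  set g : ℂ → ℂ := fun w => Complex.exp w - 1 with hg
  set w0 : ℂ := g^[m+1] z with hw0def
  -- w0 lies in the disc |u+1| ≤ 1
  have hw0 : ‖w0 + 1‖ ≤ 1 := by
    have : w0 = g (g^[m] z) := by
      rw [hw0def, Function.iterate_succ_apply' g m z]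
    rw [this]
    simpa [hg, Complex.norm_exp] using Real.exp_le_one_iff.mpr hm.le
  -- the whole orbit of w0 stays in the disc
  have horb : ∀ n : ℕ, ‖g^[n] w0 + 1‖ ≤ 1 := by
    intro n
    induction n with
    | zero => simpa using hw0
    | succ k ih =>
      rw [Function.iterate_succ_apply' g k w0]
      exact disc_invariant _ ih
  set r : ℕ → ℝ := fun n => ‖g^[n] w0‖ with hrdef
  have hr_nonneg : ∀ n, 0 ≤ r n := fun n => norm_nonneg _
  -- one-step bound
  have hstep : ∀ n : ℕ, r (n+1) ≤ r n * ((1 + Real.exp (g^[n] w0).re) / 2) := by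
    intro n
    rw [hrdef]
    simp only
    rw [Function.iterate_succ_apply' g n w0]
    exact exp_sub_one_abs_le _
  have hre_le : ∀ n : ℕ, (g^[n] w0).re ≤ -(r n)^2 / 2 := fun n =>
    re_le_of_mem_disc _ (horb n)
  have hfac_le_one : ∀ n : ℕ, (1 + Real.exp (g^[n] w0).re) / 2 ≤ 1 := by
    intro n
    have : (g^[n] w0).re ≤ 0 := by nlinarith [hre_le n, sq_nonneg (r n)]
    have := Real.exp_le_one_iff.mpr this
    linarith
  have hanti : Antitone r := by
    apply antitone_nat_of_succ_le
    intro n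
    calc r (n+1) ≤ r n * ((1 + Real.exp (g^[n] w0).re) / 2) := hstep n
      _ ≤ r n * 1 := by
          apply mul_le_mul_of_nonneg_left (hfac_le_one n) (hr_nonneg n)
      _ = r n := mul_one _
  -- limit of r
  have hbdd : BddBelow (Set.range r) := ⟨0, by rintro x ⟨n, rfl⟩; exact hr_nonneg n⟩
  set L : ℝ := ⨅ n, r n with hLdef
  have hrL : Tendsto r atTop (𝓝 L) := tendsto_atTop_ciInf hanti hbdd
  have hL_nonneg : 0 ≤ L := le_ciInf hr_nonneg
  have hL_le : ∀ n, L ≤ r n := fun n => ciInf_le hbdd n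
  -- L = 0
  have hL0 : L = 0 := by
    by_contra hL
    have hLpos : 0 < L := lt_of_le_of_ne hL_nonneg (Ne.symm hL)
    set c : ℝ := (1 + Real.exp (-(L^2) / 2)) / 2 with hcdef
    have hc_pos : 0 ≤ c := by positivity
    have hc_lt : c < 1 := by
      have : Real.exp (-(L^2) / 2) < 1 := Real.exp_lt_one_iff.mpr (by nlinarith)
      rw [hcdef]; linarith
    have hcontr : ∀ n, r (n+1) ≤ c * r n := by
      intro n
      have h1 : (g^[n] w0).re ≤ -(L^2) / 2 := by
        have := hre_le n
        have h2 : L ≤ r n := hL_le n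
        nlinarith
      calc r (n+1) ≤ r n * ((1 + Real.exp (g^[n] w0).re) / 2) := hstep n
        _ ≤ r n * c := by
            apply mul_le_mul_of_nonneg_left _ (hr_nonneg n)
            rw [hcdef]
            have := Real.exp_le_exp.mpr h1
            linarith
        _ = c * r n := mul_comm _ _
    have hgeo : ∀ n, r n ≤ c^n * r 0 := by
      intro n
      induction n with
      | zero => simp
      | succ k ih =>
        calc r (k+1) ≤ c * r k := hcontr k
          _ ≤ c * (c^k * r 0) := mul_le_mul_of_nonneg_left ih hc_pos
          _ = c^(k+1) * r 0 := by ring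
    have htend : Tendsto (fun n => c^n * r 0) atTop (𝓝 0) := by
      simpa using (tendsto_pow_atTop_nhds_zero_of_lt_one hc_pos hc_lt).mul_const (r 0)
    have : L ≤ 0 :=
      ge_of_tendsto htend (Eventually.of_forall fun n => (hL_le n).trans (hgeo n))
    linarith
  rw [hL0] at hrL
  -- convert norm convergence to convergence
  have htend0 : Tendsto (fun n => g^[n] w0) atTop (𝓝 0) := by
    rw [tendsto_zero_iff_norm_tendsto_zero]
    exact hrL
  rw [← tendsto_add_atTop_iff_nat (m+1)]
  have : (fun n => g^[n + (m+1)] z) = fun n => g^[n] w0 := by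
    funext n
    rw [hw0def, Function.iterate_add_apply]
  exact this ▸ htend0
end

section
/- Let λ = ⟨(N₀,t₀),(N₁,t₁),…⟩ be an infinite sequence in ℕ × ℤ such that X_{λ↾(k+1)} is nonempty for all k and N_i ≥ i for all i. Then the sequence t = (t₀, t₁, t₂, …) satisfies |tₙ| → ∞; in fact for every k and every n ≥ N_k, |tₙ| ≥ k+1. Moreover the sets X_{λ↾0} ⊇ X_{λ↾1} ⊇ ⋯ converge to the single point t. -/
open Filter Topology

/-- `X = {s ∈ ℤ^ℕ : |sₙ| → ∞}`. -/
def Xset : Set (ℕ → ℤ) := {s | Tendsto (fun n => |s n|) atTop atTop}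

/-- The stratum `X_α` for a finite sequence `α` of pairs `(N, t)`. -/
def strat (α : List (ℕ × ℤ)) : Set (ℕ → ℤ) :=
  {s | s ∈ Xset ∧ ∀ j : ℕ, ∀ h : j < α.length,
      s j = (α.get ⟨j, h⟩).2 ∧ ∀ k : ℕ, (α.get ⟨j, h⟩).1 ≤ k → ((j : ℤ) + 1) ≤ |s k|}

/-- If `λ = ⟨(N₀,t₀),(N₁,t₁),…⟩` is an infinite branch (all strata along it nonempty,
`Nᵢ ≥ i`), then `t = (t₀,t₁,…)` satisfies `|tₙ| ≥ k+1` for `n ≥ N_k` (so `|tₙ| → ∞`),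
`t` lies in every `X_{λ↾m}`, and the sets `X_{λ↾m}` converge to the point `t`. -/
theorem strat_branch_converges (lam : ℕ → ℕ × ℤ)
    (hne : ∀ k : ℕ, (strat (List.ofFn fun i : Fin (k + 1) => lam i)).Nonempty)
    (hN : ∀ i : ℕ, i ≤ (lam i).1) :
    (∀ k n : ℕ, (lam k).1 ≤ n → ((k : ℤ) + 1) ≤ |(lam n).2|) ∧
    Tendsto (fun n => |(lam n).2|) atTop atTop ∧
    (∀ m : ℕ, (fun n => (lam n).2) ∈ strat (List.ofFn fun i : Fin m => lam i)) ∧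
    (∀ U ∈ 𝓝 (fun n => (lam n).2), ∃ M : ℕ, ∀ m ≥ M,
      strat (List.ofFn fun i : Fin m => lam i) ⊆ U) := by
  have key : ∀ k n : ℕ, (lam k).1 ≤ n → ((k : ℤ) + 1) ≤ |(lam n).2| := by
    intro k n hkn
    obtain ⟨s, hsX, hs⟩ := hne (max k n)
    have hlen : k < (List.ofFn fun i : Fin (max k n + 1) => lam i).length := by
      simp [Nat.lt_succ_of_le, le_max_left]
    have hn : n < (List.ofFn fun i : Fin (max k n + 1) => lam i).length := by
      simp [Nat.lt_succ_of_le, le_max_right]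
    have h2 : s n = (lam n).2 := by
      have := (hs n hn).1
      simpa only [List.get_ofFn, Fin.val_cast] using this
    have h3 := (hs k hlen).2 n (by simpa only [List.get_ofFn, Fin.val_cast] using hkn)
    rwa [h2] at h3
  have ht : Tendsto (fun n => |(lam n).2|) atTop atTop := by
    rw [tendsto_atTop_atTop]
    intro b
    refine ⟨(lam b.toNat).1, fun n hn => ?_⟩
    have h1 := key b.toNat n hn
    have h2 : b ≤ (b.toNat : ℤ) := Int.self_le_toNat b
    linarith
  have hmem : ∀ m : ℕ, (fun n => (lam n).2) ∈ strat (List.ofFn fun i : Fin m => lam i) := by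
    intro m
    refine ⟨ht, fun j hj => ⟨by simp only [List.get_ofFn]; rfl, fun k hk => ?_⟩⟩
    exact key j k (by simpa only [List.get_ofFn, Fin.val_cast] using hk)
  refine ⟨key, ht, hmem, ?_⟩
  intro U hU
  rw [nhds_pi, Filter.mem_pi] at hU
  obtain ⟨I, hIfin, V, hV, hVU⟩ := hU
  obtain ⟨M, hM⟩ := hIfin.bddAbove
  refine ⟨M + 1, fun m hm s hs => ?_⟩
  apply hVU
  intro i hi
  have hiM : i < m := lt_of_le_of_lt (hM hi) (by omega)
  have hsi : s i = (lam i).2 := by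
    have := (hs.2 i (by simpa using hiM)).1
    simpa only [List.get_ofFn, Fin.val_cast] using this
  have hti : (lam i).2 ∈ V i := mem_of_mem_nhds (hV i)
  rw [hsi]
  exact hti
end

section
/- Define F : [0,∞) → [0,∞) by F(t) = eᵗ - 1, with inverse F⁻¹(t) = ln(t+1). If s ∈ ℤ^ℕ satisfies s_k = k for all k ≥ n₀ (for some n₀), then sup_{k ≥ 1} F^{-k}(2π|s_k|) < ∞, where F^{-k} is the k-fold iterate of F⁻¹. -/
open Filter Topology

/-- One step of the model dynamics `𝓕(t,s) = (eᵗ - 1 - 2π|s₁|, σ s)`. -/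
noncomputable def step (p : ℝ × (ℕ → ℤ)) : ℝ × (ℕ → ℤ) :=
  (Real.exp p.1 - 1 - 2 * Real.pi * |((p.2 1 : ℤ) : ℝ)|, fun n => p.2 (n + 1))

/-- `(t,s) ∈ J(𝓕)`: every iterate has nonnegative first coordinate. -/
noncomputable def inJ (t : ℝ) (s : ℕ → ℤ) : Prop := ∀ n : ℕ, 0 ≤ (step^[n] (t, s)).1

/-- `t_s = inf {t ≥ 0 : (t,s) ∈ J(𝓕)}`, with value `∞` if the set is empty. -/
noncomputable def tmin (s : ℕ → ℤ) : ENNReal := sInf (ENNReal.ofReal '' {t : ℝ | inJ t s})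

/-- `F⁻¹(t) = ln(t+1)`. -/
noncomputable def Finv (t : ℝ) : ℝ := Real.log (t + 1)

noncomputable def Ffun (t : ℝ) : ℝ := Real.exp t - 1

lemma Finv_Ffun (t : ℝ) : Finv (Ffun t) = t := by
  simp [Finv, Ffun, Real.log_exp]

lemma Finv_nonneg {t : ℝ} (ht : 0 ≤ t) : 0 ≤ Finv t :=
  Real.log_nonneg (by linarith)

lemma Finv_mono {a b : ℝ} (ha : 0 ≤ a) (hab : a ≤ b) : Finv a ≤ Finv b :=
  Real.log_le_log (by linarith) (by linarith)

lemma Finv_iter_mono : ∀ (k : ℕ) {a b : ℝ}, 0 ≤ a → a ≤ b →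
    0 ≤ Finv^[k] a ∧ Finv^[k] a ≤ Finv^[k] b := by
  intro k
  induction k with
  | zero => intro a b ha hab; simpa using ⟨ha, hab⟩
  | succ n ih =>
    intro a b ha hab
    simp only [Function.iterate_succ_apply]
    exact ih (Finv_nonneg ha) (Finv_mono ha hab)

lemma Finv_iter_Ffun_iter (t : ℝ) : ∀ k : ℕ, Finv^[k] (Ffun^[k] t) = t := by
  intro k
  induction k with
  | zero => simp
  | succ n ih =>
    have hF : Ffun^[n+1] t = Ffun (Ffun^[n] t) := Function.iterate_succ_apply' _ _ _
    rw [hF, Function.iterate_succ_apply, Finv_Ffun, ih]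

lemma Ffun_iter_grow : ∀ k : ℕ, 2 * Real.pi * k + 3 ≤ Ffun^[k] 3 := by
  intro k
  induction k with
  | zero => simp
  | succ n ih =>
    rw [Function.iterate_succ_apply']
    have hpi : Real.pi ≤ 4 := Real.pi_le_four
    have hpi0 : 0 < Real.pi := Real.pi_pos
    have hx : (0:ℝ) ≤ 2 * Real.pi * n := by positivity
    have h1 : Real.exp (2 * Real.pi * n + 3) ≤ Real.exp (Ffun^[n] 3) :=
      Real.exp_le_exp.2 ih
    have h2 : Real.exp (2 * Real.pi * n + 3) = Real.exp (2 * Real.pi * n) * Real.exp 3 := by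
      rw [← Real.exp_add]
    have h3 : 2 * Real.pi * n + 1 ≤ Real.exp (2 * Real.pi * n) :=
      Real.add_one_le_exp _
    have h4 : (14:ℝ) ≤ Real.exp 3 := by
      have := Real.exp_one_gt_d9
      have h3e : Real.exp 3 = Real.exp 1 * Real.exp 1 * Real.exp 1 := by
        rw [← Real.exp_add, ← Real.exp_add]; norm_num
      nlinarith [Real.exp_pos 1]
    have hexp0 : (0:ℝ) < Real.exp (2 * Real.pi * n) := Real.exp_pos _
    have : (2 * Real.pi * n + 1) * 14 ≤ Real.exp (2 * Real.pi * n) * Real.exp 3 := by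
      apply mul_le_mul h3 h4 (by norm_num) (le_of_lt hexp0)
    have goal1 : 2 * Real.pi * (n + 1) + 3 ≤ Real.exp (2 * Real.pi * n + 3) - 1 := by
      rw [h2]; nlinarith
    have : Real.exp (2 * Real.pi * n + 3) - 1 ≤ Ffun (Ffun^[n] 3) := by
      simp only [Ffun]; linarith
    push_cast
    linarith

/-- If `s_k = k` eventually, then `sup_{k ≥ 1} F^{-k}(2π|s_k|)` is finite. -/
theorem tstar_finite_of_eventually_linear (s : ℕ → ℤ) (n₀ : ℕ)
    (h : ∀ k : ℕ, n₀ ≤ k → s k = (k : ℤ)) :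
    BddAbove {x : ℝ | ∃ k : ℕ, 1 ≤ k ∧ x = Finv^[k] (2 * Real.pi * |((s k : ℤ) : ℝ)|)} := by
  set g : ℕ → ℝ := fun k => Finv^[k] (2 * Real.pi * |((s k : ℤ) : ℝ)|) with hg
  have hsub : {x : ℝ | ∃ k : ℕ, 1 ≤ k ∧ x = g k} ⊆ (g '' Set.Iio n₀) ∪ Set.Iic 3 := by
    rintro x ⟨k, hk1, rfl⟩
    by_cases hkn : k < n₀
    · exact Or.inl ⟨k, hkn, rfl⟩
    · right
      push_neg at hkn
      have hsk : s k = (k : ℤ) := h k hkn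
      have habs : |((s k : ℤ) : ℝ)| = (k : ℝ) := by
        rw [hsk]; simp
      have harg : 2 * Real.pi * |((s k : ℤ) : ℝ)| ≤ Ffun^[k] 3 := by
        rw [habs]
        have := Ffun_iter_grow k
        linarith
      have hargnn : 0 ≤ 2 * Real.pi * |((s k : ℤ) : ℝ)| := by
        positivity
      have := (Finv_iter_mono k hargnn harg).2
      simp only [Set.mem_Iic, hg]
      calc Finv^[k] (2 * Real.pi * |((s k : ℤ) : ℝ)|) ≤ Finv^[k] (Ffun^[k] 3) := this
        _ = 3 := Finv_iter_Ffun_iter 3 k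
  have hbdd : BddAbove ((g '' Set.Iio n₀) ∪ Set.Iic 3) :=
    BddAbove.union ((Set.finite_Iio n₀).image g).bddAbove (bddAbove_Iic)
  exact hbdd.mono hsub
end

section
/- The function ψ : ℤ^ℕ → [0,∞] defined by ψ(s) = t_s = inf{t ≥ 0 : (t,s) ∈ J(𝓕)} (∞ if empty) is lower semi-continuous, where ℤ^ℕ carries the product topology. -/
open Filter Topology

lemma step_snd (n : ℕ) (t : ℝ) (s : ℕ → ℤ) :
    (step^[n] (t, s)).2 = fun k => s (k + n) := by
  induction n generalizing t s with
  | zero => simp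
  | succ n ih =>
    rw [Function.iterate_succ_apply]
    have : step (t, s) = ((step (t, s)).1, fun k => s (k + 1)) := rfl
    rw [this, ih]
    funext k
    congr 1

lemma step_fst_mono (n : ℕ) (s : ℕ → ℤ) {t t' : ℝ} (h : t ≤ t') :
    (step^[n] (t, s)).1 ≤ (step^[n] (t', s)).1 := by
  induction n with
  | zero => simpa
  | succ n ih =>
    rw [Function.iterate_succ_apply', Function.iterate_succ_apply']
    show Real.exp _ - 1 - _ ≤ Real.exp _ - 1 - _
    rw [step_snd, step_snd]
    gcongr

lemma step_fst_local (n : ℕ) (t : ℝ) {s s' : ℕ → ℤ} (h : ∀ k ≤ n, s k = s' k) :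
    (step^[n] (t, s)).1 = (step^[n] (t, s')).1 := by
  induction n generalizing t s s' with
  | zero => simp
  | succ n ih =>
    rw [Function.iterate_succ_apply, Function.iterate_succ_apply]
    have e1 : (step (t, s)).1 = (step (t, s')).1 := by
      simp only [step]
      rw [h 1 (by omega)]
    have e2 : step (t, s) = ((step (t, s)).1, fun k => s (k + 1)) := rfl
    have e3 : step (t, s') = ((step (t, s')).1, fun k => s' (k + 1)) := rfl
    rw [e2, e3, ← e1]
    exact ih _ (fun k hk => h (k + 1) (by omega))

lemma step_fst_cont (n : ℕ) (s : ℕ → ℤ) : Continuous fun t => (step^[n] (t, s)).1 := by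
  induction n with
  | zero => simpa using continuous_id'
  | succ n ih =>
    have : (fun t => (step^[n+1] (t, s)).1)
        = fun t => Real.exp ((step^[n] (t, s)).1) - 1
            - 2 * Real.pi * |((s (1 + n) : ℤ) : ℝ)| := by
      funext t
      rw [Function.iterate_succ_apply']
      show Real.exp _ - 1 - _ = _
      rw [step_snd]
    rw [this]
    exact ((Real.continuous_exp.comp ih).sub continuous_const).sub continuous_const

lemma inJ_closed (s : ℕ → ℤ) : IsClosed {t | inJ t s} := by
  have : {t | inJ t s} = ⋂ n, {t | 0 ≤ (step^[n] (t, s)).1} := by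
    ext t; simp [inJ, Set.mem_iInter]
  rw [this]
  exact isClosed_iInter fun n => isClosed_le continuous_const (step_fst_cont n s)

lemma inJ_mono (s : ℕ → ℤ) {t t' : ℝ} (h : inJ t s) (htt : t ≤ t') : inJ t' s :=
  fun n => le_trans (h n) (step_fst_mono n s htt)

/-- `ψ(s) = t_s` is lower semi-continuous on `ℤ^ℕ` with the product topology. -/
theorem tmin_lowerSemicontinuous : LowerSemicontinuous tmin := by
  intro s c hc
  have hcT : c ≠ ⊤ := (hc.trans_le le_top).ne
  set r := c.toReal with hr
  have hr0 : 0 ≤ r := ENNReal.toReal_nonneg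
  have hnr : ¬ inJ r s := by
    intro h
    have : tmin s ≤ ENNReal.ofReal r := sInf_le ⟨r, h, rfl⟩
    rw [hr, ENNReal.ofReal_toReal hcT] at this
    exact absurd hc (not_lt.2 this)
  obtain ⟨n, hn⟩ : ∃ n, (step^[n] (r, s)).1 < 0 := by
    by_contra h
    push_neg at h
    exact hnr fun n => h n
  have hU : ∀ᶠ s' in 𝓝 s, ∀ k ≤ n, s' k = s k := by
    have : ∀ k : ℕ, ∀ᶠ s' in 𝓝 s, s' k = s k := by
      intro k
      have hopen : IsOpen ((fun s' : ℕ → ℤ => s' k) ⁻¹' {s k}) :=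
        (isOpen_discrete _).preimage (continuous_apply k)
      exact hopen.mem_nhds rfl
    have := (Finset.range (n + 1)).eventually_all.2 fun k _ => this k
    filter_upwards [this] with s' hs' k hk
    exact hs' k (Finset.mem_range.2 (by omega))
  filter_upwards [hU] with s' hs'
  have hnr' : ¬ inJ r s' := by
    intro h
    have := step_fst_local n r (s := s') (s' := s) hs'
    have := h n
    linarith [hn, step_fst_local n r (s := s') (s' := s) hs', h n]
  by_cases hS : {t | inJ t s'}.Nonempty
  · have hbd : BddBelow {t | inJ t s'} := ⟨0, fun t ht => ht 0⟩
    have hmem := (inJ_closed s').csInf_mem hS hbd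
    set t0 := sInf {t | inJ t s'} with ht0
    have hrt0 : r < t0 := by
      by_contra h
      push_neg at h
      exact hnr' (inJ_mono s' hmem h)
    have hle : ENNReal.ofReal t0 ≤ tmin s' := by
      apply le_sInf
      rintro x ⟨t, ht, rfl⟩
      exact ENNReal.ofReal_le_ofReal (csInf_le hbd ht)
    calc c = ENNReal.ofReal r := (ENNReal.ofReal_toReal hcT).symm
    _ < ENNReal.ofReal t0 := by
        rw [ENNReal.ofReal_lt_ofReal_iff (lt_of_le_of_lt hr0 hrt0)]
        exact hrt0
    _ ≤ tmin s' := hle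
  · have : tmin s' = ⊤ := by
      rw [tmin, Set.not_nonempty_iff_eq_empty.1 hS]
      simp
    rw [this]
    exact hcT.lt_top
end

section
/- With ψ(s) = t_s as above, ψ is monotone in the following sense: if s, s' ∈ ℤ^ℕ satisfy |s'ₙ| ≤ |sₙ| for all n, then t_{s'} ≤ t_s. -/
open Filter Topology

lemma key (s s' : ℕ → ℤ) (h : ∀ n, |s' n| ≤ |s n|) (t : ℝ) :
    ∀ n : ℕ, (step^[n] (t, s)).2 = (fun k => s (k + n)) ∧
      (step^[n] (t, s')).2 = (fun k => s' (k + n)) ∧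
      (step^[n] (t, s)).1 ≤ (step^[n] (t, s')).1 := by
  intro n
  induction n with
  | zero => exact ⟨rfl, rfl, le_refl _⟩
  | succ n ih =>
    obtain ⟨h1, h2, h3⟩ := ih
    rw [Function.iterate_succ_apply', Function.iterate_succ_apply']
    refine ⟨?_, ?_, ?_⟩
    · simp only [step, h1]; funext k; simp [add_assoc, add_comm 1 n]
    · simp only [step, h2]; funext k; simp [add_assoc, add_comm 1 n]
    · simp only [step, h1, h2]
      have habs : |((s' (1 + n) : ℤ) : ℝ)| ≤ |((s (1 + n) : ℤ) : ℝ)| := by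
        rw [← Int.cast_abs, ← Int.cast_abs]; exact_mod_cast h (1 + n)
      have := Real.exp_le_exp.mpr h3
      have hπ : (0:ℝ) ≤ 2 * Real.pi := by positivity
      nlinarith [mul_le_mul_of_nonneg_left habs hπ]

/-- Monotonicity: decreasing the absolute values of the entries of `s` can only
decrease `t_s`. -/
theorem tmin_monotone (s s' : ℕ → ℤ) (h : ∀ n, |s' n| ≤ |s n|) : tmin s' ≤ tmin s := by
  apply sInf_le_sInf
  apply Set.image_mono
  intro t ht n
  exact le_trans (ht n) (key s s' h t n).2.2
end

section
/- With ψ(s) = t_s and t*_s := sup_{k ≥ 1} F^{-k}(2π|s_k|), one has t_s ≤ t*_s + 1 for every s ∈ ℤ^ℕ. In particular, if t*_s < ∞ then t_s < ∞. -/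
open Filter Topology

/-- `t*_s = sup_{k ≥ 1} F^{-k}(2π|s_k|)`. -/
noncomputable def tstar (s : ℕ → ℤ) : ENNReal :=
  ⨆ k ∈ Set.Ici 1, ENNReal.ofReal (Finv^[k] (2 * Real.pi * |((s k : ℤ) : ℝ)|))

lemma Finv_iter_nonneg (k : ℕ) : ∀ {x : ℝ}, 0 ≤ x → 0 ≤ Finv^[k] x := by
  induction k with
  | zero => intro x hx; simpa using hx
  | succ k ih =>
    intro x hx
    rw [Function.iterate_succ_apply]
    exact ih (by simpa [Finv] using Real.log_nonneg (by linarith))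

lemma step_iter_snd (p : ℝ × (ℕ → ℤ)) (n : ℕ) : (step^[n] p).2 = fun m => p.2 (m + n) := by
  induction n with
  | zero => simp
  | succ n ih =>
    rw [Function.iterate_succ_apply', step]
    funext m
    simp only [ih]
    show p.2 (m + 1 + n) = p.2 (m + (n + 1))
    rw [show m + 1 + n = m + (n + 1) from by omega]

/-- `t_s ≤ t*_s + 1`; in particular `t*_s < ∞` implies `t_s < ∞`. -/
theorem tmin_le_tstar_add_one (s : ℕ → ℤ) :
    tmin s ≤ tstar s + 1 ∧ (tstar s < ⊤ → tmin s < ⊤) := by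
  by_cases htop : tstar s = ⊤
  · simp [htop]
  set T := (tstar s).toReal with hT
  have hT0 : 0 ≤ T := ENNReal.toReal_nonneg
  have hterm : ∀ k, 1 ≤ k → Finv^[k] (2 * Real.pi * |((s k : ℤ) : ℝ)|) ≤ T := by
    intro k hk
    have h1 : ENNReal.ofReal (Finv^[k] (2 * Real.pi * |((s k : ℤ) : ℝ)|)) ≤ tstar s :=
      le_iSup₂ (f := fun k (_ : k ∈ Set.Ici 1) =>
        ENNReal.ofReal (Finv^[k] (2 * Real.pi * |((s k : ℤ) : ℝ)|))) k hk
    rw [← ENNReal.ofReal_toReal htop] at h1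
    exact (ENNReal.ofReal_le_ofReal_iff hT0).mp h1
  have key : ∀ n, 1 ≤ (step^[n] (T + 1, s)).1 ∧
      ∀ k, 1 ≤ k →
        Finv^[k] (2 * Real.pi * |((s (k + n) : ℤ) : ℝ)|) + 1 ≤ (step^[n] (T + 1, s)).1 := by
    intro n
    induction n with
    | zero =>
      refine ⟨by simp; linarith, fun k hk => ?_⟩
      have := hterm k hk
      simpa using by linarith
    | succ n ih =>
      obtain ⟨h1, h2⟩ := ih
      rw [Function.iterate_succ_apply']
      have hsnd : (step^[n] (T + 1, s)).2 1 = s (1 + n) := by rw [step_iter_snd]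
      set Tn := (step^[n] (T + 1, s)).1 with hTn
      have hstep : (step (step^[n] (T + 1, s))).1
          = Real.exp Tn - 1 - 2 * Real.pi * |((s (1 + n) : ℤ) : ℝ)| := by
        simp [step, hsnd, hTn]
      rw [hstep]
      set A := 2 * Real.pi * |((s (1 + n) : ℤ) : ℝ)| with hA
      have hA0 : 0 ≤ A := by positivity
      have hA1 : Real.log (A + 1) + 1 ≤ Tn := by
        have := h2 1 le_rfl
        simpa [Finv] using this
      have hexpA : Real.exp 1 * (A + 1) ≤ Real.exp Tn := by
        have := Real.exp_le_exp.mpr hA1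
        rwa [Real.exp_add, Real.exp_log (by linarith), mul_comm] at this
      have he : (2 : ℝ) ≤ Real.exp 1 := by
        have := Real.add_one_le_exp 1; linarith
      constructor
      · nlinarith
      · intro k hk
        set C := Finv^[k] (2 * Real.pi * |((s (k + (n + 1)) : ℤ) : ℝ)|) with hC
        have hC0 : 0 ≤ C := Finv_iter_nonneg _ (by positivity)
        have hCk : Real.log (C + 1) + 1 ≤ Tn := by
          have h := h2 (k + 1) (by omega)
          rw [Function.iterate_succ_apply'] at h
          have hidx : k + 1 + n = k + (n + 1) := by omega
          rw [hidx] at h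
          simpa [Finv, hC] using h
        have hexpC : Real.exp 1 * (C + 1) ≤ Real.exp Tn := by
          have := Real.exp_le_exp.mpr hCk
          rwa [Real.exp_add, Real.exp_log (by linarith), mul_comm] at this
        nlinarith
  have hmem : inJ (T + 1) s := fun n => by have := (key n).1; linarith
  have hle : tmin s ≤ ENNReal.ofReal (T + 1) := sInf_le ⟨T + 1, hmem, rfl⟩
  have heq : ENNReal.ofReal (T + 1) = tstar s + 1 := by
    rw [ENNReal.ofReal_add hT0 zero_le_one, ENNReal.ofReal_one, ENNReal.ofReal_toReal htop]
  refine ⟨heq ▸ hle, fun _ => lt_of_le_of_lt (heq ▸ hle) ?_⟩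
  exact ENNReal.add_lt_top.mpr ⟨lt_top_iff_ne_top.mpr htop, ENNReal.one_lt_top⟩
end
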